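/- Let T be an abstract data type and H = (Σ, E, Λ, ↦) a distributed history with E infinite. Then H is sequentially consistent with T if and only if there exists a causal order → for H such that, for every event e ∈ E, lin((H^→).π(⌊e⌋, ⌊e⌋)) ∩ L(T) ≠ ∅ (i.e. the causal past of every event, with all outputs revealed, admits a linearization in the sequential specification). -/

import Mathlib

/-- An abstract data type: initial state, transition function and output function. -/
structure ADT (Si So Q : Type) where
  q0 : Q
  tr : Q → Si → Q
  out : Q → Si → So

/-- An input symbol is an update if it changes some state. -/
def IsUpdate {Si So Q : Type} (T : ADT Si So Q) (i : Si) : Prop :=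
  ∃ q, T.tr q i ≠ q

/-- An input symbol is a query if its output depends on the state. -/
def IsQuery {Si So Q : Type} (T : ADT Si So Q) (i : Si) : Prop :=
  ∃ q q', T.out q i ≠ T.out q' i

/-- A distributed history: a set of events, labelled by an input symbol together with
an optional output (`none` encodes a hidden operation), and a program order. -/
structure History (E Si So : Type) where
  evts : Set E
  lbl : E → Si × Option So
  po : E → E → Prop

/-- Well-formedness: the program order is a partial order on the events,
in which every event has a finite past. -/
def IsHistory {E Si So : Type} (H : History E Si So) : Prop :=
  (∀ a ∈ H.evts, H.po a a) ∧
  (∀ a ∈ H.evts, ∀ b ∈ H.evts, H.po a b → H.po b a → a = b) ∧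
  (∀ a ∈ H.evts, ∀ b ∈ H.evts, ∀ c ∈ H.evts, H.po a b → H.po b c → H.po a c) ∧
  (∀ e ∈ H.evts, {e' ∈ H.evts | H.po e' e}.Finite)

open Classical in
/-- Projection H.π(E', E''): keep only the events of E', and hide the outputs of the
events that are not in E''. -/
noncomputable def History.proj {E Si So : Type} (H : History E Si So)
    (E' E'' : Set E) : History E Si So where
  evts := E'
  lbl := fun e => if e ∈ E'' then H.lbl e else ((H.lbl e).1, none)
  po := H.po

/-- H^→ : the same history with the program order replaced by another order. -/
def History.withOrder {E Si So : Type} (H : History E Si So)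
    (r : E → E → Prop) : History E Si So where
  evts := H.evts
  lbl := H.lbl
  po := r

/-- A causal order on a history: a partial order on its events containing the program
order, such that every event is in the causal past of all but finitely many events. -/
def IsCausalOrder {E Si So : Type} (H : History E Si So) (r : E → E → Prop) : Prop :=
  (∀ a ∈ H.evts, r a a) ∧
  (∀ a ∈ H.evts, ∀ b ∈ H.evts, r a b → r b a → a = b) ∧
  (∀ a ∈ H.evts, ∀ b ∈ H.evts, ∀ c ∈ H.evts, r a b → r b c → r a c) ∧
  (∀ a ∈ H.evts, ∀ b ∈ H.evts, H.po a b → r a b) ∧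
  (∀ e ∈ H.evts, {e' ∈ H.evts | ¬ r e e'}.Finite)

/-- ⌊e⌋ : the causal past of e with respect to the order r. -/
def causalPast {E Si So : Type} (H : History E Si So)
    (r : E → E → Prop) (e : E) : Set E :=
  {e' ∈ H.evts | r e' e}

/-- lin(H) ∩ L(T) ≠ ∅ : there is a linearization of the events of H, compatible with
the order of H, that is a sequential history admissible for T.  The linearization is
given by an enumeration `s` of the events of H on an initial segment of ℕ, and
admissibility by a run (inputs `inp` and states `q`) of the transition system of T:
at each enumerated position, the input symbol of the label must match, and the
output, when it is not hidden, must match the output function of T. -/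
def LinAdm {E Si So Q : Type} (T : ADT Si So Q) (H : History E Si So) : Prop :=
  ∃ s : ℕ → Option E,
    (∀ n, s n = none → s (n + 1) = none) ∧
    (∀ m n a, s m = some a → s n = some a → m = n) ∧
    (∀ a, a ∈ H.evts ↔ ∃ n, s n = some a) ∧
    (∀ m n a b, m < n → s m = some a → s n = some b → ¬ H.po b a) ∧
    ∃ inp : ℕ → Si, ∃ q : ℕ → Q,
      q 0 = T.q0 ∧
      (∀ n, q (n + 1) = T.tr (q n) (inp n)) ∧
      ∀ n e, s n = some e →
        (H.lbl e).1 = inp n ∧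
        ((H.lbl e).2 = none ∨ (H.lbl e).2 = some (T.out (q n) (inp n)))

/-- A process of a history: a maximal chain of the program order. -/
def IsProcess {E Si So : Type} (H : History E Si So) (p : Set E) : Prop :=
  p ⊆ H.evts ∧
  (∀ a ∈ p, ∀ b ∈ p, H.po a b ∨ H.po b a) ∧
  (∀ p' : Set E, p ⊆ p' → p' ⊆ H.evts →
    (∀ a ∈ p', ∀ b ∈ p', H.po a b ∨ H.po b a) → p' = p)

/-- Sequential consistency. -/
def SC {E Si So Q : Type} (T : ADT Si So Q) (H : History E Si So) : Prop :=
  LinAdm T H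

/-- Pipelined consistency. -/
def PC {E Si So Q : Type} (T : ADT Si So Q) (H : History E Si So) : Prop :=
  ∀ p, IsProcess H p → LinAdm T (H.proj H.evts p)

/-- Weak causal consistency. -/
def WCC {E Si So Q : Type} (T : ADT Si So Q) (H : History E Si So) : Prop :=
  ∃ r, IsCausalOrder H r ∧
    ∀ e ∈ H.evts, LinAdm T ((H.withOrder r).proj (causalPast H r e) {e})

/-- Causal consistency. -/
def CC {E Si So Q : Type} (T : ADT Si So Q) (H : History E Si So) : Prop :=
  ∃ r, IsCausalOrder H r ∧
    ∀ p, IsProcess H p → ∀ e ∈ p,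
      LinAdm T ((H.withOrder r).proj (causalPast H r e) p)

/-- Causal convergence. -/
def CCv {E Si So Q : Type} (T : ADT Si So Q) (H : History E Si So) : Prop :=
  ∃ r le, IsCausalOrder H r ∧
    (∀ a ∈ H.evts, ∀ b ∈ H.evts, r a b → le a b) ∧
    (∀ a ∈ H.evts, le a a) ∧
    (∀ a ∈ H.evts, ∀ b ∈ H.evts, le a b → le b a → a = b) ∧
    (∀ a ∈ H.evts, ∀ b ∈ H.evts, ∀ c ∈ H.evts, le a b → le b c → le a c) ∧
    (∀ a ∈ H.evts, ∀ b ∈ H.evts, le a b ∨ le b a) ∧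
    ∀ e ∈ H.evts, LinAdm T ((H.withOrder le).proj (causalPast H r e) {e})


section AuxSC

open Classical

variable {E Si So Q : Type}

/-- Admissible linearization of the causal past of `e`, stated directly over `H` and `r`. -/
def LinOf (T : ADT Si So Q) (H : History E Si So) (r : E → E → Prop)
    (e : E) (s : ℕ → Option E) : Prop :=
  (∀ n, s n = none → s (n + 1) = none) ∧
  (∀ m n a, s m = some a → s n = some a → m = n) ∧
  (∀ a, a ∈ causalPast H r e ↔ ∃ n, s n = some a) ∧
  (∀ m n a b, m < n → s m = some a → s n = some b → ¬ r b a) ∧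
  ∃ inp : ℕ → Si, ∃ q : ℕ → Q,
    q 0 = T.q0 ∧
    (∀ n, q (n + 1) = T.tr (q n) (inp n)) ∧
    ∀ n e', s n = some e' →
      (H.lbl e').1 = inp n ∧
      ((H.lbl e').2 = none ∨ (H.lbl e').2 = some (T.out (q n) (inp n)))

lemma linOf_of_linAdm (T : ADT Si So Q) (H : History E Si So) (r : E → E → Prop)
    (e : E)
    (h : LinAdm T ((H.withOrder r).proj (causalPast H r e) (causalPast H r e))) :
    ∃ s, LinOf T H r e s := by
  obtain ⟨s, h1, h2, h3, h4, inp, q, hq0, hqs, hout⟩ := h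
  have h3' : ∀ a, a ∈ causalPast H r e ↔ ∃ n, s n = some a := by
    intro a
    simpa [History.proj, History.withOrder] using h3 a
  refine ⟨s, h1, h2, h3', ?_, inp, q, hq0, hqs, ?_⟩
  · intro m n a b hmn hm hn
    simpa [History.proj, History.withOrder] using h4 m n a b hmn hm hn
  · intro n e' hs
    have he' : e' ∈ causalPast H r e := (h3' e').2 ⟨n, hs⟩
    have := hout n e' hs
    simpa [History.proj, History.withOrder, he'] using this

lemma past_finite (H : History E Si So) (r : E → E → Prop)
    (hc : IsCausalOrder H r) {e : E} (he : e ∈ H.evts) :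
    (causalPast H r e).Finite := by
  obtain ⟨hr, ha, ht, hpo, hfin⟩ := hc
  have hsub : causalPast H r e ⊆ insert e {e' ∈ H.evts | ¬ r e e'} := by
    rintro x ⟨hx, hxe⟩
    by_cases hxe' : x = e
    · exact hxe' ▸ Set.mem_insert _ _
    · exact Set.mem_insert_of_mem _ ⟨hx, fun hre => hxe' (ha x hx e he hxe hre)⟩
  exact Set.Finite.subset ((hfin e he).insert e) hsub

lemma mem_past_self (H : History E Si So) (r : E → E → Prop)
    (hc : IsCausalOrder H r) {e : E} (he : e ∈ H.evts) : e ∈ causalPast H r e :=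
  ⟨he, hc.1 e he⟩

lemma level_finite (H : History E Si So) (r : E → E → Prop)
    (hc : IsCausalOrder H r) (n : ℕ) :
    {e ∈ H.evts | (causalPast H r e).ncard ≤ n}.Finite := by
  obtain ⟨hr, ha, ht, hpo, hfin⟩ := hc
  induction n with
  | zero =>
    have hempty : {e ∈ H.evts | (causalPast H r e).ncard ≤ 0} = ∅ := by
      ext e
      simp only [Set.mem_setOf_eq, Set.mem_empty_iff_false, iff_false, not_and, not_le]
      intro he
      exact (Set.ncard_pos (past_finite H r ⟨hr, ha, ht, hpo, hfin⟩ he)).mpr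
        ⟨e, mem_past_self H r ⟨hr, ha, ht, hpo, hfin⟩ he⟩
    rw [hempty]; exact Set.finite_empty
  | succ n ih =>
    by_contra hS
    have hSinf : {e ∈ H.evts | (causalPast H r e).ncard ≤ n + 1}.Infinite := hS
    have key : ∀ e ∈ {e ∈ H.evts | (causalPast H r e).ncard ≤ n + 1},
        (causalPast H r e).ncard ≤ n := by
      rintro e ⟨he, hle⟩
      obtain ⟨e'', he''⟩ := (hSinf.diff (((hfin e he).insert e))).nonempty
      obtain ⟨⟨he''E, he''le⟩, he''nb⟩ := he''
      have hne : e'' ≠ e := fun h => he''nb (h ▸ Set.mem_insert _ _)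
      have hree : r e e'' := by
        by_contra hnr
        exact he''nb (Set.mem_insert_of_mem _ ⟨he''E, hnr⟩)
      have hss : causalPast H r e ⊂ causalPast H r e'' := by
        constructor
        · rintro x ⟨hx, hxe⟩
          exact ⟨hx, ht x hx e he e'' he''E hxe hree⟩
        · intro hsub
          have : e'' ∈ causalPast H r e :=
            hsub (mem_past_self H r ⟨hr, ha, ht, hpo, hfin⟩ he''E)
          exact hne (ha e'' he''E e he this.2 hree)
      have := Set.ncard_lt_ncard hss (past_finite H r ⟨hr, ha, ht, hpo, hfin⟩ he''E)
      omega
    exact hS (ih.subset (fun e he' => ⟨he'.1, key e he'⟩))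

/-- A good prefix: the first `n` events of an admissible linearization of the causal
past of some event. -/
def GoodPrefix (T : ADT Si So Q) (H : History E Si So) (r : E → E → Prop)
    (n : ℕ) (f : Fin n → E) : Prop :=
  ∃ e ∈ H.evts, ∃ s, LinOf T H r e s ∧ ∀ i : Fin n, s i = some (f i)

lemma goodPrefix_mono (T : ADT Si So Q) (H : History E Si So) (r : E → E → Prop)
    {m n : ℕ} (h : m ≤ n) {f : Fin n → E} (hf : GoodPrefix T H r n f) :
    GoodPrefix T H r m (fun i => f (Fin.castLE h i)) := by
  obtain ⟨e, he, s, hlin, hs⟩ := hf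
  exact ⟨e, he, s, hlin, fun i => by simpa using hs (Fin.castLE h i)⟩

lemma goodPrefix_facts (T : ADT Si So Q) (H : History E Si So) (r : E → E → Prop)
    (hc : IsCausalOrder H r) {n : ℕ} {f : Fin n → E}
    (hf : GoodPrefix T H r n f) :
    (∀ i, f i ∈ H.evts) ∧ (Function.Injective f) ∧
    (∀ i j : Fin n, (i : ℕ) < (j : ℕ) → ¬ r (f j) (f i)) ∧
    (∀ i : Fin n, causalPast H r (f i) ⊆ f '' {j | (j : ℕ) ≤ (i : ℕ)}) := by
  obtain ⟨e, he, s, ⟨h1, h2, h3, h4, _⟩, hs⟩ := hf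
  have hpast : ∀ i, f i ∈ causalPast H r e := fun i => (h3 (f i)).2 ⟨i, hs i⟩
  refine ⟨fun i => (hpast i).1, ?_, ?_, ?_⟩
  · intro i j hij
    exact Fin.ext (h2 i j (f i) (hs i) (hij ▸ hs j))
  · intro i j hij
    exact h4 i j (f i) (f j) hij (hs i) (hs j)
  · intro i x hx
    have hxe : x ∈ causalPast H r e :=
      ⟨hx.1, hc.2.2.1 x hx.1 (f i) (hpast i).1 e he hx.2 (hpast i).2⟩
    obtain ⟨k, hk⟩ := (h3 x).1 hxe
    by_cases hki : k ≤ (i : ℕ)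
    · have hkn : k < n := lt_of_le_of_lt hki i.2
      have hfk : s k = some (f ⟨k, hkn⟩) := hs ⟨k, hkn⟩
      have : x = f ⟨k, hkn⟩ := Option.some.inj (hk ▸ hfk)
      exact ⟨⟨k, hkn⟩, hki, this.symm⟩
    · exact absurd (h4 i k (f i) x (by omega) (hs i) hk) (fun h => h hx.2)

lemma goodPrefix_ncard (T : ADT Si So Q) (H : History E Si So) (r : E → E → Prop)
    (hc : IsCausalOrder H r) {n : ℕ} {f : Fin n → E}
    (hf : GoodPrefix T H r n f) (i : Fin n) :
    (causalPast H r (f i)).ncard ≤ (i : ℕ) + 1 := by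
  obtain ⟨hevt, hinj, hcomp, hsub⟩ := goodPrefix_facts T H r hc hf
  have h1 : (causalPast H r (f i)).ncard ≤ (f '' {j : Fin n | (j : ℕ) ≤ (i : ℕ)}).ncard :=
    Set.ncard_le_ncard (hsub i) ((Set.toFinite _).image f)
  have h2 : (f '' {j : Fin n | (j : ℕ) ≤ (i : ℕ)}).ncard ≤
      ({j : Fin n | (j : ℕ) ≤ (i : ℕ)}).ncard := Set.ncard_image_le (Set.toFinite _)
  have h3 : ({j : Fin n | (j : ℕ) ≤ (i : ℕ)}).ncard ≤ (i : ℕ) + 1 := by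
    rw [← Nat.card_coe_set_eq]
    have hinj' : Function.Injective
        (fun j : {j : Fin n // (j : ℕ) ≤ (i : ℕ)} =>
          (⟨(j.1 : ℕ), Nat.lt_succ_of_le j.2⟩ : Fin ((i : ℕ) + 1))) := by
      intro a b hab
      have h' : ((a.1 : Fin n) : ℕ) = ((b.1 : Fin n) : ℕ) := by
        have := congrArg Fin.val hab
        simpa using this
      exact Subtype.ext (Fin.ext h')
    have := Nat.card_le_card_of_injective _ hinj'
    exact this.trans (by simp)
  omega

lemma goodPrefix_finite (T : ADT Si So Q) (H : History E Si So) (r : E → E → Prop)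
    (hc : IsCausalOrder H r) (n : ℕ) :
    {f : Fin n → E | GoodPrefix T H r n f}.Finite := by
  have hA := level_finite H r hc n
  have hsub : {f : Fin n → E | GoodPrefix T H r n f} ⊆
      Set.pi Set.univ (fun _ : Fin n => {e ∈ H.evts | (causalPast H r e).ncard ≤ n}) := by
    intro f hf i _
    obtain ⟨hevt, -, -, -⟩ := goodPrefix_facts T H r hc hf
    have := goodPrefix_ncard T H r hc hf i
    exact ⟨hevt i, by have := i.2; omega⟩
  exact Set.Finite.subset (Set.Finite.pi (fun _ => hA)) hsub

lemma goodPrefix_nonempty (T : ADT Si So Q) (H : History E Si So) (r : E → E → Prop)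
    (hc : IsCausalOrder H r) (hinf : H.evts.Infinite)
    (hlin : ∀ e ∈ H.evts,
      LinAdm T ((H.withOrder r).proj (causalPast H r e) (causalPast H r e)))
    (n : ℕ) : ∃ f : Fin n → E, GoodPrefix T H r n f := by
  obtain ⟨e, he⟩ := (hinf.diff (level_finite H r hc n)).nonempty
  have heE : e ∈ H.evts := he.1
  have hcard : n < (causalPast H r e).ncard := by
    by_contra h
    exact he.2 ⟨heE, by omega⟩
  obtain ⟨s, hs⟩ := linOf_of_linAdm T H r e (hlin e heE)
  obtain ⟨h1, h2, h3, h4, h5⟩ := hs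
  have hnone : ∀ k, s k = none → ∀ m, k ≤ m → s m = none := by
    intro k hk m hm
    induction m with
    | zero => exact (Nat.le_zero.mp hm) ▸ hk
    | succ m ih =>
      rcases Nat.lt_or_ge k (m + 1) with h | h
      · exact h1 m (ih (by omega))
      · exact (Nat.le_antisymm hm h) ▸ hk
  have hsome : ∀ i : Fin n, ∃ a, s i = some a := by
    intro i
    by_contra h
    push_neg at h
    have hni : s i = none := by
      cases hsi : s (i : ℕ) with
      | none => rfl
      | some a => exact absurd hsi (h a)
    -- every element of the past has index < i
    have hidx : ∀ x : causalPast H r e, ∃ k : Fin (i : ℕ), s k = some x.1 := by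
      rintro ⟨x, hx⟩
      obtain ⟨k, hk⟩ := (h3 x).1 hx
      refine ⟨⟨k, ?_⟩, hk⟩
      by_contra hki
      rw [hnone (i : ℕ) hni k (by omega)] at hk
      exact absurd hk (by simp)
    choose g hg using hidx
    have hginj : Function.Injective g := by
      intro a b hab
      exact Subtype.ext (Option.some.inj ((hg a).symm.trans (hab ▸ hg b)))
    have hcard' : (causalPast H r e).ncard ≤ (i : ℕ) := by
      rw [← Nat.card_coe_set_eq]
      simpa using Nat.card_le_card_of_injective g hginj
    have := i.2
    omega
  choose f hf using hsome
  exact ⟨f, e, heE, s, ⟨h1, h2, h3, h4, h5⟩, hf⟩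

/-- A viable prefix: one that extends to good prefixes of every length. -/
def Viable (T : ADT Si So Q) (H : History E Si So) (r : E → E → Prop)
    (n : ℕ) (f : Fin n → E) : Prop :=
  ∀ m : ℕ, ∃ g : Fin (n + m) → E, GoodPrefix T H r (n + m) g ∧
    ∀ i : Fin n, g (Fin.castLE (Nat.le_add_right n m) i) = f i

lemma viable_goodPrefix (T : ADT Si So Q) (H : History E Si So) (r : E → E → Prop)
    {n : ℕ} {f : Fin n → E} (hv : Viable T H r n f) : GoodPrefix T H r n f := by
  obtain ⟨g, hg, hres⟩ := hv 0
  have heq : (fun i : Fin n => g (Fin.castLE (Nat.le_add_right n 0) i)) = f :=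
    funext hres
  rw [← heq]
  exact goodPrefix_mono T H r (Nat.le_add_right n 0) hg

lemma viable_zero (T : ADT Si So Q) (H : History E Si So) (r : E → E → Prop)
    (hc : IsCausalOrder H r) (hinf : H.evts.Infinite)
    (hlin : ∀ e ∈ H.evts,
      LinAdm T ((H.withOrder r).proj (causalPast H r e) (causalPast H r e))) :
    Viable T H r 0 (fun i => i.elim0) := by
  intro m
  obtain ⟨g, hg⟩ := goodPrefix_nonempty T H r hc hinf hlin (0 + m)
  exact ⟨g, hg, fun i => i.elim0⟩

lemma viable_step (T : ADT Si So Q) (H : History E Si So) (r : E → E → Prop)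
    (hc : IsCausalOrder H r) {n : ℕ} {f : Fin n → E}
    (hv : Viable T H r n f) :
    ∃ x : E, Viable T H r (n + 1) (Fin.snoc f x) := by
  choose g hgood hres using hv
  have hAfin : {e ∈ H.evts | (causalPast H r e).ncard ≤ n + 1}.Finite :=
    level_finite H r hc (n + 1)
  haveI : Finite {e ∈ H.evts | (causalPast H r e).ncard ≤ n + 1} := hAfin.to_subtype
  have hmem : ∀ m : ℕ, g (m + 1) ⟨n, by omega⟩ ∈
      {e ∈ H.evts | (causalPast H r e).ncard ≤ n + 1} := by
    intro m
    have h1 := (goodPrefix_facts T H r hc (hgood (m + 1))).1 ⟨n, by omega⟩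
    have h2 := goodPrefix_ncard T H r hc (hgood (m + 1)) ⟨n, by omega⟩
    exact ⟨h1, by simpa using h2⟩
  let c : ℕ → {e ∈ H.evts | (causalPast H r e).ncard ≤ n + 1} :=
    fun m => ⟨g (m + 1) ⟨n, by omega⟩, hmem m⟩
  obtain ⟨y, hfib⟩ := Finite.exists_infinite_fiber c
  have hfib' : (c ⁻¹' {y}).Infinite := Set.infinite_coe_iff.mp hfib
  refine ⟨y.1, ?_⟩
  intro m'
  obtain ⟨M, hM, hMlt⟩ := hfib'.exists_gt m'
  have hgx : g (M + 1) ⟨n, by omega⟩ = y.1 := by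
    have hcM : c M = y := hM
    exact congrArg Subtype.val hcM
  have hle : (n + 1) + m' ≤ n + (M + 1) := by omega
  refine ⟨fun i => g (M + 1) (Fin.castLE hle i),
    goodPrefix_mono T H r hle (hgood (M + 1)), ?_⟩
  intro i
  refine Fin.lastCases ?_ ?_ i
  · have harg : Fin.castLE hle (Fin.castLE (Nat.le_add_right (n + 1) m') (Fin.last n)) =
        (⟨n, by omega⟩ : Fin (n + (M + 1))) := Fin.ext (by simp)
    beta_reduce
    rw [harg, Fin.snoc_last]
    exact hgx
  · intro j
    have harg : Fin.castLE hle (Fin.castLE (Nat.le_add_right (n + 1) m') (Fin.castSucc j)) =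
        Fin.castLE (Nat.le_add_right n (M + 1)) j := Fin.ext (by simp)
    beta_reduce
    rw [harg, Fin.snoc_castSucc]
    exact hres (M + 1) j

end AuxSC

/-- for an infinite history H, sequential consistency with T is
equivalent to the existence of a causal order r such that, for every event e, the
causal past of e with all outputs revealed admits a linearization in L(T). -/
theorem sc_iff_causal_past_linearizable
    {E Si So Q : Type} [Countable E] [Countable Si] [Countable So] [Countable Q]
    (T : ADT Si So Q) (H : History E Si So) (hH : IsHistory H)
    (hinf : H.evts.Infinite) :
    SC T H ↔ ∃ r, IsCausalOrder H r ∧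
      ∀ e ∈ H.evts,
        LinAdm T ((H.withOrder r).proj (causalPast H r e) (causalPast H r e)) := by
  constructor
  · -- Forward: from a global linearization, build the causal order from indices.
    rintro ⟨s, h1, h2, h3, h4, inp, q, hq0, hqs, hout⟩
    classical
    set idx : E → ℕ := fun a => if h : ∃ n, s n = some a then h.choose else 0 with hidxdef
    have hsidx : ∀ a ∈ H.evts, s (idx a) = some a := by
      intro a ha
      have h := (h3 a).1 ha
      simp only [hidxdef, dif_pos h]
      exact h.choose_spec
    have hidx_eq : ∀ a ∈ H.evts, ∀ n, s n = some a → idx a = n := fun a ha n hn =>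
      h2 _ _ _ (hsidx a ha) hn
    have hinj : ∀ a ∈ H.evts, ∀ b ∈ H.evts, idx a = idx b → a = b := by
      intro a ha b hb hab
      have h' : s (idx b) = some a := hab ▸ hsidx a ha
      exact Option.some.inj (h'.symm.trans (hsidx b hb))
    set r : E → E → Prop := fun a b => a ∈ H.evts ∧ b ∈ H.evts ∧ idx a ≤ idx b with hrdef
    have hco : IsCausalOrder H r := by
      refine ⟨fun a ha => ⟨ha, ha, le_rfl⟩, ?_, ?_, ?_, ?_⟩
      · intro a ha b hb hab hba
        exact hinj a ha b hb (le_antisymm hab.2.2 hba.2.2)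
      · intro a ha b hb c hc hab hbc
        exact ⟨ha, hc, le_trans hab.2.2 hbc.2.2⟩
      · intro a ha b hb hpo
        refine ⟨ha, hb, ?_⟩
        by_contra hlt
        exact h4 (idx b) (idx a) b a (by omega) (hsidx b hb) (hsidx a ha) hpo
      · intro e he
        have hsub : {e' ∈ H.evts | ¬ r e e'} ⊆ {e' ∈ H.evts | idx e' < idx e} := by
          rintro x ⟨hx, hnr⟩
          refine ⟨hx, ?_⟩
          by_contra h
          exact hnr ⟨he, hx, by omega⟩
        have him : (idx '' {e' ∈ H.evts | idx e' < idx e}).Finite :=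
          (Set.finite_Iio (idx e)).subset (by rintro _ ⟨x, ⟨hx1, hx2⟩, rfl⟩; exact hx2)
        have hfin' : {e' ∈ H.evts | idx e' < idx e}.Finite :=
          Set.Finite.of_finite_image him (fun a ha b hb hab => hinj a ha.1 b hb.1 hab)
        exact hfin'.subset hsub
    refine ⟨r, hco, ?_⟩
    intro e0 he0
    refine ⟨fun n => if n ≤ idx e0 then s n else none, ?_, ?_, ?_, ?_, inp, q, hq0, hqs, ?_⟩
    · intro n hn
      beta_reduce at hn ⊢
      by_cases h : n + 1 ≤ idx e0
      · rw [if_pos h]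
        rw [if_pos (by omega : n ≤ idx e0)] at hn
        exact h1 n hn
      · rw [if_neg h]
    · intro m n a hm hn
      beta_reduce at hm hn
      by_cases h : m ≤ idx e0
      swap
      · rw [if_neg h] at hm; exact absurd hm (by simp)
      by_cases h' : n ≤ idx e0
      swap
      · rw [if_neg h'] at hn; exact absurd hn (by simp)
      rw [if_pos h] at hm; rw [if_pos h'] at hn
      exact h2 m n a hm hn
    · intro a
      show a ∈ causalPast H r e0 ↔ _
      constructor
      · rintro ⟨ha, hra⟩
        exact ⟨idx a, by beta_reduce; rw [if_pos hra.2.2]; exact hsidx a ha⟩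
      · rintro ⟨n, hn⟩
        beta_reduce at hn
        by_cases h : n ≤ idx e0
        · rw [if_pos h] at hn
          have ha : a ∈ H.evts := (h3 a).2 ⟨n, hn⟩
          have := hidx_eq a ha n hn
          exact ⟨ha, ha, he0, by omega⟩
        · rw [if_neg h] at hn; exact absurd hn (by simp)
    · intro m n a b hmn hm hn
      beta_reduce at hm hn
      by_cases h : m ≤ idx e0
      swap
      · rw [if_neg h] at hm; exact absurd hm (by simp)
      by_cases h' : n ≤ idx e0
      swap
      · rw [if_neg h'] at hn; exact absurd hn (by simp)
      rw [if_pos h] at hm; rw [if_pos h'] at hn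
      show ¬ r b a
      rintro ⟨hb, ha, hba⟩
      have h5 := hidx_eq a ((h3 a).2 ⟨m, hm⟩) m hm
      have h6 := hidx_eq b ((h3 b).2 ⟨n, hn⟩) n hn
      omega
    · intro n e hn
      beta_reduce at hn
      by_cases h : n ≤ idx e0
      swap
      · rw [if_neg h] at hn; exact absurd hn (by simp)
      rw [if_pos h] at hn
      have ha : e ∈ H.evts := (h3 e).2 ⟨n, hn⟩
      have hie := hidx_eq e ha n hn
      have he : e ∈ causalPast H r e0 := ⟨ha, ha, he0, by omega⟩
      have hlbl : ((H.withOrder r).proj (causalPast H r e0) (causalPast H r e0)).lbl e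
          = H.lbl e := by
        simp [History.proj, History.withOrder, he]
      rw [hlbl]
      exact hout n e hn
  · -- Backward: build a global linearization by compactness.
    rintro ⟨r, hc, hlin⟩
    classical
    have hstep : ∀ (n : ℕ) (f : Fin n → E), Viable T H r n f →
        ∃ x : E, Viable T H r (n + 1) (Fin.snoc f x) :=
      fun n f hv => viable_step T H r hc hv
    let F : (n : ℕ) → {f : Fin n → E // Viable T H r n f} :=
      fun n => Nat.rec ⟨fun i => i.elim0, viable_zero T H r hc hinf hlin⟩
        (fun n p => ⟨Fin.snoc p.1 (hstep n p.1 p.2).choose, (hstep n p.1 p.2).choose_spec⟩) n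
    have hF : ∀ n, (F (n + 1)).1 = Fin.snoc (F n).1 ((hstep n (F n).1 (F n).2).choose) :=
      fun n => rfl
    have hcoh : ∀ (m n : ℕ) (h : n ≤ m) (i : Fin n), (F m).1 (Fin.castLE h i) = (F n).1 i := by
      intro m
      induction m with
      | zero =>
        intro n h i
        have : n = 0 := by omega
        subst this
        exact i.elim0
      | succ m ih =>
        intro n h i
        rcases Nat.eq_or_lt_of_le h with heq | hlt
        · subst heq
          have : Fin.castLE h i = i := Fin.ext (by simp)
          rw [this]
        · have h' : n ≤ m := by omega
          rw [hF m]
          have harg : Fin.castLE h i = Fin.castSucc (Fin.castLE h' i) := Fin.ext (by simp)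
          rw [harg, Fin.snoc_castSucc]
          exact ih n h' i
    let g : ℕ → E := fun k => (F (k + 1)).1 ⟨k, Nat.lt_succ_self k⟩
    have hFg : ∀ (n : ℕ) (i : Fin n), (F n).1 i = g (i : ℕ) := by
      intro n i
      have h1 : (i : ℕ) + 1 ≤ n := i.2
      have hco := hcoh n ((i : ℕ) + 1) h1 ⟨(i : ℕ), Nat.lt_succ_self _⟩
      have harg : Fin.castLE h1 (⟨(i : ℕ), Nat.lt_succ_self _⟩ : Fin ((i : ℕ) + 1)) = i :=
        Fin.ext (by simp)
      rw [harg] at hco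
      exact hco
    have hgood' : ∀ n, GoodPrefix T H r n (fun i : Fin n => g (i : ℕ)) := by
      intro n
      have hg := viable_goodPrefix T H r (F n).2
      rwa [show (F n).1 = fun i : Fin n => g (i : ℕ) from funext (hFg n)] at hg
    have hgevts : ∀ n, g n ∈ H.evts := by
      intro n
      exact (goodPrefix_facts T H r hc (hgood' (n + 1))).1 ⟨n, Nat.lt_succ_self n⟩
    have hginj : Function.Injective g := by
      intro m n hmn
      have hinjf := (goodPrefix_facts T H r hc (hgood' (max m n + 1))).2.1
      have : (⟨m, by omega⟩ : Fin (max m n + 1)) = ⟨n, by omega⟩ :=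
        hinjf (by simpa using hmn)
      simpa using congrArg Fin.val this
    refine ⟨fun n => some (g n), fun n hn => absurd hn (by simp), ?_, ?_, ?_,
      fun n => (H.lbl (g n)).1,
      fun n => Nat.rec T.q0 (fun k qk => T.tr qk (H.lbl (g k)).1) n,
      rfl, fun n => rfl, ?_⟩
    · intro m n a hm hn
      have hgm : g m = a := Option.some.inj hm
      have hgn : g n = a := Option.some.inj hn
      exact hginj (hgm.trans hgn.symm)
    · intro a
      constructor
      · intro ha
        by_contra hno
        push_neg at hno
        have hnot : ∀ n, g n ≠ a := fun n h => hno n (by rw [h])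
        have hrange : Set.range g ⊆ {e' ∈ H.evts | ¬ r a e'} := by
          rintro x ⟨n, rfl⟩
          refine ⟨hgevts n, ?_⟩
          intro hra
          obtain ⟨e, he, s', ⟨h1', h2', h3', h4', _⟩, hs'⟩ := hgood' (n + 1)
          have hsn : s' n = some (g n) := by simpa using hs' ⟨n, Nat.lt_succ_self n⟩
          have hgn_past : g n ∈ causalPast H r e := (h3' (g n)).2 ⟨n, hsn⟩
          have ha_past : a ∈ causalPast H r e :=
            ⟨ha, hc.2.2.1 a ha (g n) hgn_past.1 e he hra hgn_past.2⟩
          obtain ⟨k, hk⟩ := (h3' a).1 ha_past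
          rcases Nat.lt_or_ge n k with hnk | hkn
          · exact h4' n k (g n) a hnk hsn hk hra
          · have hsk : s' k = some (g k) := by simpa using hs' ⟨k, by omega⟩
            exact hnot k (Option.some.inj (hsk.symm.trans hk))
        have hrinf : (Set.range g).Infinite := Set.infinite_range_of_injective hginj
        exact absurd hrinf ((hc.2.2.2.2 a ha).subset hrange).not_infinite
      · rintro ⟨n, hn⟩
        have : g n = a := Option.some.inj hn
        exact this ▸ hgevts n
    · intro m n a b hmn hm hn
      have hga : g m = a := Option.some.inj hm
      have hgb : g n = b := Option.some.inj hn
      intro hpo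
      have hcomp := (goodPrefix_facts T H r hc (hgood' (n + 1))).2.2.1
        ⟨m, by omega⟩ ⟨n, Nat.lt_succ_self n⟩ (by simpa using hmn)
      refine hcomp ?_
      show r (g n) (g m)
      have := hc.2.2.2.1 b (hgb ▸ hgevts n) a (hga ▸ hgevts m) hpo
      rw [hga, hgb]
      exact this
    · intro n e hn
      obtain rfl : g n = e := Option.some.inj hn
      obtain ⟨e0, he0, s', ⟨h1', h2', h3', h4', inp', q', hq0', hrec', hout'⟩, hs'⟩ :=
        hgood' (n + 1)
      have hsk : ∀ k : ℕ, k < n + 1 → s' k = some (g k) := by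
        intro k hk
        simpa using hs' ⟨k, hk⟩
      have hq : ∀ k, k ≤ n → q' k = Nat.rec T.q0 (fun k qk => T.tr qk (H.lbl (g k)).1) k := by
        intro k
        induction k with
        | zero => intro _; exact hq0'
        | succ k ih =>
          intro hk
          have hik : (H.lbl (g k)).1 = inp' k :=
            (hout' k (g k) (hsk k (by omega))).1
          rw [hrec' k, ih (by omega), ← hik]
      have hthis := hout' n (g n) (hsk n (Nat.lt_succ_self n))
      refine ⟨rfl, ?_⟩
      rcases hthis.2 with h | h
      · exact Or.inl h
      · refine Or.inr ?_
        rw [hq n le_rfl, ← hthis.1] at h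
        exact h
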